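/- If the diameter of the metric space (X,d) is at most 2^(1/p)·C, then for finite point patterns ξ = {x₁,…,x_m} and η = {y₁,…,y_n} with m ≤ n, the relative transport–transform distance satisfies τ̄(ξ,η)^p = (1/n)·((n−m)·C^p + min_{π ∈ S_n} Σ_{i=1}^m d(x_i, y_{π(i)})^p), i.e. the RTT-metric coincides with the OSPA metric. -/

import Mathlib

section AuxTT
open Multiset

lemma lemA {α β : Type*} : ∀ (m : ℕ) (x : Fin m → α) (γ : Multiset (α × β)),
    γ.map Prod.fst = (↑(List.ofFn x) : Multiset α) →
    ∃ z : Fin m → β, γ = (↑(List.ofFn fun i => (x i, z i)) : Multiset (α × β)) := by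
  intro m
  induction m with
  | zero =>
    intro x γ h
    refine ⟨fun i => i.elim0, ?_⟩
    simpa [Multiset.map_eq_zero] using h
  | succ m ih =>
    intro x γ h
    classical
    rw [List.ofFn_succ, ← Multiset.cons_coe] at h
    have hx0 : x 0 ∈ γ.map Prod.fst := by rw [h]; exact Multiset.mem_cons_self _ _
    obtain ⟨q, hq, hq1⟩ := Multiset.mem_map.1 hx0
    have hγ : γ = q ::ₘ γ.erase q := (Multiset.cons_erase hq).symm
    have h' : (γ.erase q).map Prod.fst = (↑(List.ofFn fun i => x i.succ) : Multiset α) := by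
      have h2 := h
      rw [hγ, Multiset.map_cons, hq1] at h2
      exact (Multiset.cons_inj_right _).1 h2
    obtain ⟨z', hz'⟩ := ih (fun i => x i.succ) _ h'
    have zf : Fin (m + 1) → β := Fin.cons q.2 z'
    refine ⟨Fin.cons q.2 z', ?_⟩
    rw [hγ, hz', List.ofFn_succ, ← Multiset.cons_coe]
    have hq2 : q = (x 0, (Fin.cons q.2 z' : Fin (m + 1) → β) 0) := by
      simp only [Fin.cons_zero]
      rw [← hq1]
    rw [← hq2]
    simp only [Fin.cons_succ]

lemma lemB1 {β : Type*} : ∀ (m n : ℕ) (z : Fin m → β) (y : Fin n → β),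
    (↑(List.ofFn z) : Multiset β) ≤ (↑(List.ofFn y) : Multiset β) →
    ∃ j : Fin m → Fin n, Function.Injective j ∧ ∀ i, z i = y (j i) := by
  intro m
  induction m with
  | zero =>
    exact fun n z y _ => ⟨fun i => i.elim0, fun a => a.elim0, fun i => i.elim0⟩
  | succ m ih =>
    intro n z y h
    classical
    have hz0 : z 0 ∈ (↑(List.ofFn y) : Multiset β) := by
      refine Multiset.mem_of_le h ?_
      rw [List.ofFn_succ, ← Multiset.cons_coe]
      exact Multiset.mem_cons_self _ _
    rw [Multiset.mem_coe, List.mem_ofFn] at hz0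
    obtain ⟨i₀, hi₀⟩ := hz0
    cases n with
    | zero => exact i₀.elim0
    | succ n' =>
      have huniv : (↑(List.ofFn y) : Multiset β)
          = y i₀ ::ₘ (↑(List.ofFn fun k => y (i₀.succAbove k)) : Multiset β) := by
        rw [← Fin.univ_val_map, ← Fin.univ_val_map, Fin.univ_succAbove _ i₀, Finset.cons_val,
          Multiset.map_cons, Finset.map_val, Multiset.map_map]
        rfl
      have h2 : (↑(List.ofFn fun i => z i.succ) : Multiset β)
          ≤ (↑(List.ofFn fun k => y (i₀.succAbove k)) : Multiset β) := by
        have h3 := Multiset.erase_le_erase (z 0) h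
        rw [List.ofFn_succ, ← Multiset.cons_coe, Multiset.erase_cons_head] at h3
        rwa [huniv, hi₀, Multiset.erase_cons_head] at h3
      obtain ⟨j', hj'inj, hj'⟩ := ih n' (fun i => z i.succ) (fun k => y (i₀.succAbove k)) h2
      refine ⟨Fin.cons i₀ (fun i => i₀.succAbove (j' i)), ?_, ?_⟩
      · intro a b hab
        induction a using Fin.cases with
        | zero =>
          induction b using Fin.cases with
          | zero => rfl
          | succ b =>
            simp only [Fin.cons_zero, Fin.cons_succ] at hab
            exact absurd hab.symm (Fin.succAbove_ne i₀ (j' b))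
        | succ a =>
          induction b using Fin.cases with
          | zero =>
            simp only [Fin.cons_zero, Fin.cons_succ] at hab
            exact absurd hab (Fin.succAbove_ne i₀ (j' a))
          | succ b =>
            simp only [Fin.cons_succ] at hab
            exact congrArg Fin.succ (hj'inj (Fin.succAbove_right_injective hab))
      · intro i
        induction i using Fin.cases with
        | zero => simpa [Fin.cons_zero] using hi₀.symm
        | succ i => simpa [Fin.cons_succ] using hj' i

lemma lemB2 {m n : ℕ} (hmn : m ≤ n) (j : Fin m → Fin n) (hj : Function.Injective j) :
    ∃ π : Equiv.Perm (Fin n), ∀ i, π (Fin.castLE hmn i) = j i := by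
  classical
  let e1 : Fin m ≃ Set.range (Fin.castLE hmn) := Equiv.ofInjective _ (Fin.castLE_injective hmn)
  let e2 : Fin m ≃ Set.range j := Equiv.ofInjective j hj
  let e : {i : Fin n // i ∈ Set.range (Fin.castLE hmn)} ≃ {i : Fin n // i ∈ Set.range j} :=
    e1.symm.trans e2
  refine ⟨Equiv.extendSubtype e, fun i => ?_⟩
  have hmem : Fin.castLE hmn i ∈ Set.range (Fin.castLE hmn) := ⟨i, rfl⟩
  rw [Equiv.extendSubtype_apply_of_mem e _ hmem]
  have h1 : e1 i = ⟨Fin.castLE hmn i, hmem⟩ := Subtype.ext rfl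
  show ((e1.symm.trans e2) ⟨Fin.castLE hmn i, hmem⟩ : Fin n) = j i
  rw [Equiv.trans_apply, ← h1, Equiv.symm_apply_apply]
  rfl

lemma lemExt {α β : Type*} (s : Multiset α) (t : Multiset β)
    (h : Multiset.card s ≤ Multiset.card t) :
    ∃ δ : Multiset (α × β), δ.map Prod.fst = s ∧ δ.map Prod.snd ≤ t ∧
      Multiset.card δ = Multiset.card s := by
  revert h
  refine Quotient.inductionOn₂ s t fun ls lt h => ?_
  simp only [quot_mk_to_coe, Multiset.coe_card] at h ⊢
  have hlen : (lt.take ls.length).length = ls.length := by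
    rw [List.length_take]
    omega
  refine ⟨↑(ls.zip (lt.take ls.length)), ?_, ?_, ?_⟩
  · rw [Multiset.map_coe, List.map_fst_zip hlen.symm.le]
  · rw [Multiset.map_coe, List.map_snd_zip hlen.le]
    exact Multiset.coe_le.2 (List.take_sublist _ _).subperm
  · rw [Multiset.coe_card, List.length_zip]
    omega

lemma lemC {β : Type*} {m n : ℕ} (y : Fin n → β) (j : Fin m → Fin n)
    (hj : Function.Injective j) :
    (↑(List.ofFn fun i => y (j i)) : Multiset β) ≤ (↑(List.ofFn y) : Multiset β) := by
  rw [← Fin.univ_val_map, ← Fin.univ_val_map]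
  have : Multiset.map (fun i => y (j i)) Finset.univ.val
      = Multiset.map y (Multiset.map j Finset.univ.val) := by
    rw [Multiset.map_map]; rfl
  rw [this]
  refine Multiset.map_le_map ?_
  have h2 : Multiset.map j Finset.univ.val = (Finset.univ.map ⟨j, hj⟩).val := by
    rw [Finset.map_val]; rfl
  rw [h2]
  exact Finset.val_le_iff.2 (Finset.subset_univ _)

end AuxTT

/-- `p`-th power of the transport-transform distance between finite point patterns. -/
noncomputable def ttP {X : Type*} [MetricSpace X] (C p : ℝ) (ξ η : Multiset X) : ℝ :=
  sInf { c : ℝ | ∃ γ : Multiset (X × X),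
    γ.map Prod.fst ≤ ξ ∧ γ.map Prod.snd ≤ η ∧
    c = ((Multiset.card ξ : ℝ) + Multiset.card η - 2 * Multiset.card γ) * C ^ p
        + (γ.map (fun z => dist z.1 z.2 ^ p)).sum }

lemma ttP_value {X : Type*} [MetricSpace X] (C p : ℝ) (hC : 0 < C) (hp : 1 ≤ p)
    (hdiam : ∀ a b : X, dist a b ≤ (2 : ℝ) ^ (1 / p) * C)
    (m n : ℕ) (hmn : m ≤ n) (x : Fin m → X) (y : Fin n → X) :
    ttP C p (↑(List.ofFn x) : Multiset X) (↑(List.ofFn y) : Multiset X) =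
      ((n : ℝ) - m) * C ^ p +
      sInf { c : ℝ | ∃ π : Equiv.Perm (Fin n),
        c = ∑ i : Fin m, dist (x i) (y (π (Fin.castLE hmn i))) ^ p } := by
  classical
  have hp0 : (0 : ℝ) < p := lt_of_lt_of_le one_pos hp
  set F : Equiv.Perm (Fin n) → ℝ :=
    fun π => ∑ i : Fin m, dist (x i) (y (π (Fin.castLE hmn i))) ^ p with hF
  have hT : { c : ℝ | ∃ π : Equiv.Perm (Fin n), c = F π } = Set.range F :=
    Set.ext fun c => ⟨fun ⟨π, h⟩ => ⟨π, h.symm⟩, fun ⟨π, h⟩ => ⟨π, h.symm⟩⟩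
  set A : ℝ := sInf { c : ℝ | ∃ π : Equiv.Perm (Fin n), c = F π } with hA
  have hA_mem : A ∈ { c : ℝ | ∃ π : Equiv.Perm (Fin n), c = F π } := by
    rw [hA, hT]
    exact Set.Nonempty.csInf_mem ⟨F 1, 1, rfl⟩ (Set.finite_range F)
  have hA_le : ∀ π : Equiv.Perm (Fin n), A ≤ F π := by
    intro π
    rw [hA, hT]
    exact csInf_le (Set.finite_range F).bddBelow ⟨π, rfl⟩
  have cardx : Multiset.card (↑(List.ofFn x) : Multiset X) = m := by simp
  have cardy : Multiset.card (↑(List.ofFn y) : Multiset X) = n := by simp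
  have dbound : ∀ a b : X, dist a b ^ p ≤ 2 * C ^ p := by
    intro a b
    have h1 : dist a b ^ p ≤ ((2 : ℝ) ^ (1 / p) * C) ^ p :=
      Real.rpow_le_rpow dist_nonneg (hdiam a b) hp0.le
    rwa [Real.mul_rpow (Real.rpow_nonneg (by norm_num) _) hC.le,
      ← Real.rpow_mul (by norm_num : (0:ℝ) ≤ 2), one_div_mul_cancel hp0.ne',
      Real.rpow_one] at h1
  -- the defining set of ttP
  set S : Set ℝ := { c : ℝ | ∃ γ : Multiset (X × X),
    γ.map Prod.fst ≤ (↑(List.ofFn x) : Multiset X) ∧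
    γ.map Prod.snd ≤ (↑(List.ofFn y) : Multiset X) ∧
    c = ((Multiset.card (↑(List.ofFn x) : Multiset X) : ℝ)
          + Multiset.card (↑(List.ofFn y) : Multiset X)
          - 2 * Multiset.card γ) * C ^ p
        + (γ.map (fun z => dist z.1 z.2 ^ p)).sum } with hS
  have httP : ttP C p (↑(List.ofFn x) : Multiset X) (↑(List.ofFn y) : Multiset X) = sInf S := rfl
  -- lower bound
  have hlow : ∀ c ∈ S, ((n : ℝ) - m) * C ^ p + A ≤ c := by
    rintro c ⟨γ, hfst, hsnd, hc⟩
    set k := Multiset.card γ with hk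
    have hkm : k ≤ m := by
      have h1 := Multiset.card_le_card hfst
      rwa [Multiset.card_map, cardx] at h1
    have hcards : Multiset.card ((↑(List.ofFn x) : Multiset X) - γ.map Prod.fst) = m - k := by
      have h1 := congrArg Multiset.card (add_tsub_cancel_of_le hfst)
      rw [Multiset.card_add, Multiset.card_map, cardx] at h1
      omega
    have hcardt : Multiset.card ((↑(List.ofFn y) : Multiset X) - γ.map Prod.snd) = n - k := by
      have h1 := congrArg Multiset.card (add_tsub_cancel_of_le hsnd)
      rw [Multiset.card_add, Multiset.card_map, cardy] at h1
      have hkn : k ≤ n := hkm.trans hmn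
      omega
    obtain ⟨δ, hδfst, hδsnd, hδcard⟩ := lemExt
      ((↑(List.ofFn x) : Multiset X) - γ.map Prod.fst)
      ((↑(List.ofFn y) : Multiset X) - γ.map Prod.snd)
      (by rw [hcards, hcardt]; omega)
    set γ' := γ + δ with hγ'
    have hγ'fst : γ'.map Prod.fst = (↑(List.ofFn x) : Multiset X) := by
      rw [hγ', Multiset.map_add, hδfst, add_tsub_cancel_of_le hfst]
    have hγ'snd : γ'.map Prod.snd ≤ (↑(List.ofFn y) : Multiset X) := by
      rw [hγ', Multiset.map_add]
      calc γ.map Prod.snd + δ.map Prod.snd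
          ≤ γ.map Prod.snd + ((↑(List.ofFn y) : Multiset X) - γ.map Prod.snd) :=
            add_le_add (le_refl _) hδsnd
        _ = (↑(List.ofFn y) : Multiset X) := add_tsub_cancel_of_le hsnd
    obtain ⟨z, hz⟩ := lemA m x γ' hγ'fst
    have hsndz : γ'.map Prod.snd = (↑(List.ofFn z) : Multiset X) := by
      rw [hz, Multiset.map_coe, List.map_ofFn]
      rfl
    obtain ⟨j, hjinj, hjz⟩ := lemB1 m n z y (hsndz ▸ hγ'snd)
    obtain ⟨π, hπ⟩ := lemB2 hmn j hjinj
    have hFπ : F π = ∑ i : Fin m, dist (x i) (z i) ^ p := by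
      rw [hF]
      refine Finset.sum_congr rfl fun i _ => ?_
      rw [hπ i, ← hjz i]
    have hsum' : (γ'.map (fun w => dist w.1 w.2 ^ p)).sum
        = ∑ i : Fin m, dist (x i) (z i) ^ p := by
      rw [hz, Multiset.map_coe, List.map_ofFn, Multiset.sum_coe, List.sum_ofFn]
      rfl
    have hδsum : (δ.map (fun w => dist w.1 w.2 ^ p)).sum ≤ ((m - k : ℕ) : ℝ) * (2 * C ^ p) := by
      have h1 := Multiset.sum_le_card_nsmul (δ.map (fun w => dist w.1 w.2 ^ p)) (2 * C ^ p) ?_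
      · rwa [Multiset.card_map, hδcard, hcards, nsmul_eq_mul] at h1
      · rintro r hr
        obtain ⟨w, _, rfl⟩ := Multiset.mem_map.1 hr
        exact dbound w.1 w.2
    have hsplit : (γ'.map (fun w => dist w.1 w.2 ^ p)).sum
        = (γ.map (fun w => dist w.1 w.2 ^ p)).sum + (δ.map (fun w => dist w.1 w.2 ^ p)).sum := by
      rw [hγ', Multiset.map_add, Multiset.sum_add]
    have hAle : A ≤ (γ.map (fun w => dist w.1 w.2 ^ p)).sum + ((m : ℝ) - k) * (2 * C ^ p) := by
      have h2 : ((m - k : ℕ) : ℝ) = (m : ℝ) - k := by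
        rw [Nat.cast_sub hkm]
      calc A ≤ F π := hA_le π
        _ = (γ.map (fun w => dist w.1 w.2 ^ p)).sum + (δ.map (fun w => dist w.1 w.2 ^ p)).sum := by
            rw [hFπ, ← hsum', hsplit]
        _ ≤ (γ.map (fun w => dist w.1 w.2 ^ p)).sum + ((m : ℝ) - k) * (2 * C ^ p) := by
            rw [← h2]
            exact add_le_add (le_refl _) hδsum
    have hCp : (0:ℝ) ≤ C ^ p := Real.rpow_nonneg hC.le p
    rw [hc, cardx, cardy]
    have hmn' : (m : ℝ) ≤ n := Nat.cast_le.2 hmn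
    have hkm' : (k : ℝ) ≤ m := Nat.cast_le.2 hkm
    nlinarith [hAle]
  -- the member achieving the bound
  obtain ⟨π₀, hπ₀⟩ := hA_mem
  have hmem : ((n : ℝ) - m) * C ^ p + A ∈ S := by
    refine ⟨(↑(List.ofFn fun i => (x i, y (π₀ (Fin.castLE hmn i)))) : Multiset (X × X)),
      ?_, ?_, ?_⟩
    · rw [Multiset.map_coe, List.map_ofFn]
      rfl
    · have h1 : (Multiset.map Prod.snd
          (↑(List.ofFn fun i => (x i, y (π₀ (Fin.castLE hmn i)))) : Multiset (X × X)))
          = (↑(List.ofFn fun i => y ((π₀ ∘ Fin.castLE hmn) i)) : Multiset X) := by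
        rw [Multiset.map_coe, List.map_ofFn]
        rfl
      rw [h1]
      exact lemC y (π₀ ∘ Fin.castLE hmn)
        ((Equiv.injective π₀).comp (Fin.castLE_injective hmn))
    · have hcardγ : Multiset.card
          (↑(List.ofFn fun i => (x i, y (π₀ (Fin.castLE hmn i)))) : Multiset (X × X)) = m := by
        simp
      have hsum : ((↑(List.ofFn fun i => (x i, y (π₀ (Fin.castLE hmn i)))) :
            Multiset (X × X)).map (fun w => dist w.1 w.2 ^ p)).sum = F π₀ := by
        rw [Multiset.map_coe, List.map_ofFn, Multiset.sum_coe, List.sum_ofFn]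
        rfl
      rw [hcardγ, hsum, cardx, cardy, hπ₀]
      ring
  rw [httP]
  exact le_antisymm (csInf_le ⟨((n : ℝ) - m) * C ^ p + A, hlow⟩ hmem)
    (le_csInf ⟨_, hmem⟩ hlow)

/-- The transport-transform (TT) distance `τ_{C,p}`. -/
noncomputable def ttDist {X : Type*} [MetricSpace X] (C p : ℝ) (ξ η : Multiset X) : ℝ :=
  ttP C p ξ η ^ (1 / p)

-- The relative transport-transform (RTT) distance `τ̄_{C,p}`.
open Classical in
noncomputable def rttDist {X : Type*} [MetricSpace X] (C p : ℝ) (ξ η : Multiset X) : ℝ :=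
  if ξ = 0 ∧ η = 0 then 0
  else ttDist C p ξ η / ((max (Multiset.card ξ) (Multiset.card η) : ℝ) ^ (1 / p))

/-- If `diam X ≤ 2^(1/p)·C`, the RTT-metric coincides with the OSPA metric. -/
theorem stmt6 {X : Type*} [MetricSpace X] (C p : ℝ) (hC : 0 < C) (hp : 1 ≤ p)
    (hdiam : ∀ a b : X, dist a b ≤ (2 : ℝ) ^ (1 / p) * C)
    (m n : ℕ) (hmn : m ≤ n) (hn : 0 < n) (x : Fin m → X) (y : Fin n → X) :
    rttDist C p (Multiset.ofList (List.ofFn x)) (Multiset.ofList (List.ofFn y)) ^ p =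
    (1 / (n : ℝ)) * (((n : ℝ) - m) * C ^ p +
      sInf { c : ℝ | ∃ π : Equiv.Perm (Fin n),
        c = ∑ i : Fin m, dist (x i) (y (π (Fin.castLE hmn i))) ^ p }) := by
  classical
  have hp0 : (0 : ℝ) < p := lt_of_lt_of_le one_pos hp
  set A : ℝ := sInf { c : ℝ | ∃ π : Equiv.Perm (Fin n),
      c = ∑ i : Fin m, dist (x i) (y (π (Fin.castLE hmn i))) ^ p } with hA
  set F : Equiv.Perm (Fin n) → ℝ :=
    fun π => ∑ i : Fin m, dist (x i) (y (π (Fin.castLE hmn i))) ^ p with hF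
  have hT : { c : ℝ | ∃ π : Equiv.Perm (Fin n), c = F π } = Set.range F :=
    Set.ext fun c => ⟨fun ⟨π, h⟩ => ⟨π, h.symm⟩, fun ⟨π, h⟩ => ⟨π, h.symm⟩⟩
  have hA_mem : A ∈ { c : ℝ | ∃ π : Equiv.Perm (Fin n), c = F π } := by
    rw [hA, hT]
    exact Set.Nonempty.csInf_mem ⟨F 1, 1, rfl⟩ (Set.finite_range F)
  obtain ⟨π₀, hπ₀⟩ := hA_mem
  have hA0 : 0 ≤ A := by
    rw [hπ₀, hF]
    exact Finset.sum_nonneg fun i _ => Real.rpow_nonneg dist_nonneg p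
  have hCp : (0:ℝ) ≤ C ^ p := Real.rpow_nonneg hC.le p
  have hmn' : (m : ℝ) ≤ n := Nat.cast_le.2 hmn
  have hV0 : 0 ≤ ((n : ℝ) - m) * C ^ p + A := by
    have : (0:ℝ) ≤ ((n : ℝ) - m) * C ^ p := mul_nonneg (by linarith) hCp
    linarith
  have hne : ¬((Multiset.ofList (List.ofFn x) : Multiset X) = 0 ∧
      (Multiset.ofList (List.ofFn y) : Multiset X) = 0) := by
    rintro ⟨-, h2⟩
    have h3 := congrArg Multiset.card h2
    simp at h3
    omega
  have hmax : (max ((Multiset.card (Multiset.ofList (List.ofFn x) : Multiset X) : ℕ) : ℝ)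
      ((Multiset.card (Multiset.ofList (List.ofFn y) : Multiset X) : ℕ) : ℝ)) = (n : ℝ) := by
    have h1 : Multiset.card (Multiset.ofList (List.ofFn x) : Multiset X) = m := by simp
    have h2 : Multiset.card (Multiset.ofList (List.ofFn y) : Multiset X) = n := by simp
    rw [h1, h2, max_eq_right hmn']
  rw [rttDist, if_neg hne, ttDist, hmax,
    ttP_value C p hC hp hdiam m n hmn x y, ← hA]
  have hn0 : (0:ℝ) ≤ (n : ℝ) := Nat.cast_nonneg n
  rw [← Real.div_rpow hV0 hn0, ← Real.rpow_mul (div_nonneg hV0 hn0),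
    one_div_mul_cancel hp0.ne', Real.rpow_one, one_div_mul_eq_div]
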